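/- arXiv:2108.10784 — 2 statements merged into one kernel-verified Lean document; each statement's English description precedes it below -/
import Mathlib

section
/- Let A, B be finite types, N : A → Finset B, F a type, and g : A → F with the property that g a = g a' implies N a = N a'. Let A' be a finite subset of A that is complete, i.e., A' contains every a : A with g a ∈ g '' A', and suppose |A'| ≤ |⋃_{a ∈ A'} N a|. Then every subset A'' ⊆ A' with g '' A'' = g '' A' also satisfies |A''| ≤ |⋃_{a ∈ A''} N a|. -/
/-- Claim 1 of the paper, stated abstractly: if a complete subset `A'` (one containing
every element whose group occurs among the groups of `A'`) satisfies Hall's condition,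
then so does every subset `A'' ⊆ A'` covering the same groups. -/
theorem hall_condition_of_complete {A B F : Type*} [Fintype A] [Fintype B] [DecidableEq B]
    (N : A → Finset B) (g : A → F)
    (hg : ∀ a a' : A, g a = g a' → N a = N a')
    (A' : Finset A)
    (hcomplete : ∀ a : A, (∃ a' ∈ A', g a = g a') → a ∈ A')
    (hhall : A'.card ≤ (A'.biUnion N).card) :
    ∀ A'' : Finset A, A'' ⊆ A' → g '' (↑A'' : Set A) = g '' (↑A' : Set A) →
      A''.card ≤ (A''.biUnion N).card := by
  intro A'' hsub himg
  have hbi : A''.biUnion N = A'.biUnion N := by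
    apply Finset.Subset.antisymm
    · exact Finset.biUnion_subset_biUnion_of_subset_left N hsub
    · intro b hb
      rw [Finset.mem_biUnion] at hb ⊢
      obtain ⟨a, ha, hba⟩ := hb
      have : g a ∈ g '' (↑A'' : Set A) := himg ▸ ⟨a, ha, rfl⟩
      obtain ⟨a'', ha'', hga⟩ := this
      exact ⟨a'', ha'', (hg a'' a hga) ▸ hba⟩
  rw [hbi]
  exact le_trans (Finset.card_le_card hsub) hhall
end

section
/- Let A, B be finite types, N : A → Finset B, F a type, and g : A → F with the property that g a = g a' implies N a = N a'. Suppose that Hall's condition |A'| ≤ |⋃_{a ∈ A'} N a| holds for every complete finite subset A' of A (i.e., every subset of the form g⁻¹(S) for S ⊆ F). Then there exists an injective function M : A → B with M a ∈ N a for every a : A. -/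
/-- If Hall's condition holds for every complete finite subset of `A` (with respect to a
grouping `g` under which grouped elements have identical neighborhoods), then there is a
matching saturating `A`. -/
theorem matching_of_hall_on_complete_subsets {A B F : Type*} [Fintype A] [Fintype B]
    [DecidableEq B] (N : A → Finset B) (g : A → F)
    (hg : ∀ a a' : A, g a = g a' → N a = N a')
    (hhall : ∀ A' : Finset A, (∀ a : A, (∃ a' ∈ A', g a = g a') → a ∈ A') →
      A'.card ≤ (A'.biUnion N).card) :
    ∃ M : A → B, Function.Injective M ∧ ∀ a : A, M a ∈ N a := by
  classical
  rw [← Finset.all_card_le_biUnion_card_iff_exists_injective]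
  intro s
  set t : Finset A := Finset.univ.filter (fun a => ∃ a' ∈ s, g a = g a') with ht
  have hst : s ⊆ t := fun a ha => by
    simp only [ht, Finset.mem_filter, Finset.mem_univ, true_and]
    exact ⟨a, ha, rfl⟩
  have hcomplete : ∀ a : A, (∃ a' ∈ t, g a = g a') → a ∈ t := by
    intro a ⟨a', ha', hgeq⟩
    simp only [ht, Finset.mem_filter, Finset.mem_univ, true_and] at ha' ⊢
    obtain ⟨a'', ha'', h2⟩ := ha'
    exact ⟨a'', ha'', hgeq.trans h2⟩
  have hsub : t.biUnion N ⊆ s.biUnion N := by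
    intro b hb
    rw [Finset.mem_biUnion] at hb ⊢
    obtain ⟨a, ha, hba⟩ := hb
    simp only [ht, Finset.mem_filter, Finset.mem_univ, true_and] at ha
    obtain ⟨a', ha', hgeq⟩ := ha
    exact ⟨a', ha', (hg a a' hgeq) ▸ hba⟩
  calc s.card ≤ t.card := Finset.card_le_card hst
    _ ≤ (t.biUnion N).card := hhall t hcomplete
    _ ≤ (s.biUnion N).card := Finset.card_le_card hsub
end
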